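/- Let K be a field of characteristic different from 2, V a finite-dimensional K-vector space, and B : V × V → K a non-degenerate symmetric bilinear form. Let a₁, ..., a_k be pairwise commuting linear automorphisms of V preserving B (B(aᵢv, aᵢw) = B(v,w) for all v,w) with aᵢ² = Id_V, and suppose that for all i ≠ j the (−1)-eigenspaces satisfy V_{−1}(aᵢ) ∩ V_{−1}(aⱼ) = {0}. Set W = ∩ᵢ V_{1}(aᵢ). Then V = W ⊕ V_{−1}(a₁) ⊕ ⋯ ⊕ V_{−1}(a_k), these summands are pairwise orthogonal with respect to B, and the restriction of B to each summand is non-degenerate. Moreover, for each i, aᵢ acts as −Id on V_{−1}(aᵢ) and as Id on W and on V_{−1}(aⱼ) for every j ≠ i. -/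
import Mathlib


/-- Let `K` be a field of characteristic `≠ 2`, `V` a finite-dimensional `K`-vector
space, `B` a non-degenerate symmetric bilinear form on `V`, and `a₁, …, a_k` pairwise
commuting involutive linear automorphisms of `V` preserving `B`, whose `(-1)`-eigenspaces
pairwise intersect trivially.  With `W = ⋂ᵢ V₁(aᵢ)` one has
`V = W ⊕ V₋₁(a₁) ⊕ ⋯ ⊕ V₋₁(a_k)`, the summands are pairwise orthogonal for `B`, the
restriction of `B` to each summand is non-degenerate, and each `aᵢ` acts as `-Id` on
`V₋₁(aᵢ)` and as `Id` on `W` and on each `V₋₁(aⱼ)` with `j ≠ i`. -/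
theorem stmt12 {K V : Type*} [Field K] (h2 : (2 : K) ≠ 0)
    [AddCommGroup V] [Module K V] [FiniteDimensional K V]
    (B : V →ₗ[K] V →ₗ[K] K)
    (hsymm : ∀ v w : V, B v w = B w v)
    (hnd : ∀ v : V, (∀ w : V, B v w = 0) → v = 0)
    {k : ℕ} (a : Fin k → V →ₗ[K] V)
    (hcomm : ∀ i j, (a i).comp (a j) = (a j).comp (a i))
    (hpres : ∀ i, ∀ v w : V, B (a i v) (a i w) = B v w)
    (hinv : ∀ i, ∀ v : V, a i (a i v) = v)
    (heig : ∀ i j, i ≠ j → ∀ v : V, a i v = -v → a j v = -v → v = 0) :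
    ∀ (W : Submodule K V) (N : Fin k → Submodule K V),
      W = (⨅ i, LinearMap.ker (a i - LinearMap.id)) →
      N = (fun i => LinearMap.ker (a i + LinearMap.id)) →
      -- `V = W ⊕ V₋₁(a₁) ⊕ ⋯ ⊕ V₋₁(a_k)` (internal direct sum)
      (W ⊔ ⨆ i, N i = ⊤) ∧
      Disjoint W (⨆ i, N i) ∧
      (∀ i, Disjoint (N i) (W ⊔ ⨆ (j : Fin k) (_ : j ≠ i), N j)) ∧
      -- the summands are pairwise orthogonal with respect to `B`
      (∀ i, ∀ v ∈ W, ∀ w ∈ N i, B v w = 0) ∧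
      (∀ i j, i ≠ j → ∀ v ∈ N i, ∀ w ∈ N j, B v w = 0) ∧
      -- the restriction of `B` to each summand is non-degenerate
      (∀ v ∈ W, (∀ w ∈ W, B v w = 0) → v = 0) ∧
      (∀ i, ∀ v ∈ N i, (∀ w ∈ N i, B v w = 0) → v = 0) ∧
      -- `aᵢ` acts as `-Id` on `V₋₁(aᵢ)`, and as `Id` on `W` and on `V₋₁(aⱼ)` for `j ≠ i`
      (∀ i, ∀ v ∈ N i, a i v = -v) ∧
      (∀ i, ∀ v ∈ W, a i v = v) ∧
      (∀ i j, i ≠ j → ∀ v ∈ N j, a i v = v) := by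
  intro W N hWdef hNdef
  subst hWdef hNdef
  -- membership characterizations
  have hNmem : ∀ i (v : V), v ∈ LinearMap.ker (a i + LinearMap.id) ↔ a i v = -v := by
    intro i v
    simp [LinearMap.mem_ker, add_eq_zero_iff_eq_neg]
  have hWmem : ∀ v : V, v ∈ (⨅ i, LinearMap.ker (a i - LinearMap.id)) ↔ ∀ i, a i v = v := by
    intro v
    simp [Submodule.mem_iInf, LinearMap.mem_ker, sub_eq_zero]
  -- commuting pointwise
  have hcomm' : ∀ i j (v : V), a i (a j v) = a j (a i v) := by
    intro i j v
    exact DFunLike.congr_fun (hcomm i j) v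
  -- key: if i ≠ j and v is in the (-1)-eigenspace of a j, then a i fixes v
  have hfix : ∀ i j, i ≠ j → ∀ v : V, a j v = -v → a i v = v := by
    intro i j hij v hv
    have h1 : a i (v - a i v) = -(v - a i v) := by
      rw [map_sub, hinv i v]; abel
    have h2' : a j (v - a i v) = -(v - a i v) := by
      rw [map_sub, ← hcomm' i j v, hv, map_neg]
      abel
    have := heig i j hij (v - a i v) h1 h2'
    have : a i v = v := by
      have := sub_eq_zero.mp this
      exact this.symm
    exact this
  -- projections
  set P : Fin k → V →ₗ[K] V := fun i => (2⁻¹ : K) • (LinearMap.id - a i) with hPdef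
  set Q : V →ₗ[K] V := LinearMap.id - ∑ i, P i with hQdef
  have hP : ∀ i (v : V), P i v = (2⁻¹ : K) • (v - a i v) := by
    intro i v; simp [hPdef]
  have hQ : ∀ v : V, Q v = v - ∑ i, P i v := by
    intro v; simp [hQdef]
  have htwo : ∀ v : V, (2 : K) • ((2⁻¹ : K) • v) = v := by
    intro v; rw [smul_smul, mul_inv_cancel₀ h2, one_smul]
  -- P i v lies in N i
  have hPmem : ∀ i (v : V), a i (P i v) = -(P i v) := by
    intro i v
    rw [hP, map_smul, map_sub, hinv i v]
    rw [← smul_neg, neg_sub]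
  -- P i is the identity on N i
  have hPid : ∀ i (v : V), a i v = -v → P i v = v := by
    intro i v hv
    rw [hP, hv, sub_neg_eq_add, ← two_smul K v, smul_smul, inv_mul_cancel₀ h2, one_smul]
  -- P i kills vectors fixed by a i
  have hPzero : ∀ i (v : V), a i v = v → P i v = 0 := by
    intro i v hv
    rw [hP, hv, sub_self, smul_zero]
  -- Q v lies in W
  have hQW : ∀ (v : V) i, a i (Q v) = Q v := by
    intro v i
    have hsum : ∑ j, (a i (P j v) - P j v) = a i v - v := by
      rw [Finset.sum_eq_single_of_mem i (Finset.mem_univ i)]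
      · rw [hPmem i v]
        have h1 : (2 : K) • P i v = v - a i v := by rw [hP, htwo]
        have : -(P i v) - P i v = -((2 : K) • P i v) := by
          rw [two_smul]; abel
        rw [this, h1, neg_sub]
      · intro j _ hji
        rw [hfix i j (Ne.symm hji) (P j v) (hPmem j v), sub_self]
    have expand : a i (Q v) = a i v - ∑ j, a i (P j v) := by
      rw [hQ, map_sub, map_sum]
    have : a i (Q v) - Q v = (a i v - v) - ∑ j, (a i (P j v) - P j v) := by
      rw [expand, hQ, Finset.sum_sub_distrib]
      abel
    rw [hsum, sub_self] at this
    exact sub_eq_zero.mp this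
  -- Q vanishes on each N i
  have hQN : ∀ i (v : V), a i v = -v → Q v = 0 := by
    intro i v hv
    rw [hQ, Finset.sum_eq_single_of_mem i (Finset.mem_univ i)]
    · rw [hPid i v hv, sub_self]
    · intro j _ hji
      exact hPzero j v (hfix j i hji v hv)
  -- Q is the identity on W
  have hQid : ∀ v : V, (∀ i, a i v = v) → Q v = v := by
    intro v hv
    rw [hQ, Finset.sum_eq_zero (fun j _ => hPzero j v (hv j)), sub_zero]
  -- orthogonality helpers
  have horth : ∀ i (v w : V), a i v = v → a i w = -w → B v w = 0 := by
    intro i v w hv hw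
    have h : B v w = -(B v w) := by
      conv_lhs => rw [← hpres i v w, hv, hw, map_neg]
    have h2m : (2 : K) * B v w = 0 := by linear_combination h
    exact (mul_eq_zero.mp h2m).resolve_left h2
  refine ⟨?_, ?_, ?_, ?_, ?_, ?_, ?_, ?_, ?_, ?_⟩
  · -- spanning
    rw [eq_top_iff]
    intro v _
    have hdecomp : v = Q v + ∑ i, P i v := by rw [hQ]; abel
    rw [hdecomp]
    refine Submodule.add_mem_sup ?_ ?_
    · exact (hWmem (Q v)).mpr (fun i => hQW v i)
    · exact Submodule.sum_mem _ fun i _ =>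
        Submodule.mem_iSup_of_mem i ((hNmem i (P i v)).mpr (hPmem i v))
  · -- disjointness of W and the sup of the N i
    rw [Submodule.disjoint_def]
    intro x hxW hxN
    have hker : (⨆ i, LinearMap.ker (a i + LinearMap.id)) ≤ LinearMap.ker Q := by
      refine iSup_le fun i v hv => ?_
      exact LinearMap.mem_ker.mpr (hQN i v ((hNmem i v).mp hv))
    have := hker hxN
    rw [LinearMap.mem_ker] at this
    rw [← hQid x ((hWmem x).mp hxW), this]
  · -- disjointness of N i from the others
    intro i
    rw [Submodule.disjoint_def]
    intro x hxN hxR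
    have hker : (⨅ i, LinearMap.ker (a i - LinearMap.id)) ⊔
        (⨆ (j : Fin k) (_ : j ≠ i), LinearMap.ker (a j + LinearMap.id)) ≤
        LinearMap.ker (P i) := by
      refine sup_le ?_ ?_
      · intro v hv
        exact LinearMap.mem_ker.mpr (hPzero i v (((hWmem v).mp hv) i))
      · refine iSup_le fun j => iSup_le fun hji v hv => ?_
        exact LinearMap.mem_ker.mpr
          (hPzero i v (hfix i j (Ne.symm hji) v ((hNmem j v).mp hv)))
    have := hker hxR
    rw [LinearMap.mem_ker] at this
    rw [← hPid i x ((hNmem i x).mp hxN), this]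
  · -- W ⟂ N i
    intro i v hv w hw
    exact horth i v w (((hWmem v).mp hv) i) ((hNmem i w).mp hw)
  · -- N i ⟂ N j
    intro i j hij v hv w hw
    exact horth j v w (hfix j i hij.symm v ((hNmem i v).mp hv)) ((hNmem j w).mp hw)
  · -- nondegeneracy on W
    intro v hv hB
    refine hnd v fun u => ?_
    have hdecomp : u = Q u + ∑ i, P i u := by rw [hQ]; abel
    rw [hdecomp, map_add, map_sum]
    have h1 : B v (Q u) = 0 := hB (Q u) ((hWmem (Q u)).mpr (fun i => hQW u i))
    have h2' : ∀ i ∈ Finset.univ, B v (P i u) = 0 := fun i _ =>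
      horth i v (P i u) (((hWmem v).mp hv) i) (hPmem i u)
    rw [h1, Finset.sum_eq_zero h2', add_zero]
  · -- nondegeneracy on N i
    intro i v hv hB
    refine hnd v fun u => ?_
    have hdecomp : u = Q u + ∑ j, P j u := by rw [hQ]; abel
    rw [hdecomp, map_add, map_sum]
    have h1 : B v (Q u) = 0 := by
      rw [hsymm]
      exact horth i (Q u) v (hQW u i) ((hNmem i v).mp hv)
    have h2' : ∀ j ∈ Finset.univ, B v (P j u) = 0 := by
      intro j _
      by_cases hji : j = i
      · subst hji
        exact hB (P j u) ((hNmem j (P j u)).mpr (hPmem j u))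
      · exact horth j v (P j u) (hfix j i hji v ((hNmem i v).mp hv))
          (hPmem j u)
    rw [h1, Finset.sum_eq_zero h2', add_zero]
  · -- a i acts as -Id on N i
    intro i v hv
    exact (hNmem i v).mp hv
  · -- a i acts as Id on W
    intro i v hv
    exact ((hWmem v).mp hv) i
  · -- a i acts as Id on N j for j ≠ i
    intro i j hij v hv
    exact hfix i j hij v ((hNmem j v).mp hv)
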